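/- If a compact invariant set Λ of a flow contains a sectionally contracting subspace E of dimension l+1 and a sectionally expanding subspace F of dimension d−l in the tangent space at a hyperbolic singularity σ, then the index of σ satisfies Ind(σ)−1 ≤ l ≤ Ind(σ). -/

import Mathlib

open scoped RealInnerProductSpace

/-- The (unsigned) area of the parallelogram spanned by `u` and `v`. -/
noncomputable def area {V : Type*} [NormedAddCommGroup V] [InnerProductSpace ℝ V]
    (u v : V) : ℝ :=
  Real.sqrt (‖u‖ ^ 2 * ‖v‖ ^ 2 - ⟪u, v⟫ ^ 2)

/-- `S` is an invariant sectionally contracting subspace of the linear flow `Φ`. -/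
def SectionallyContracting {V : Type*} [NormedAddCommGroup V] [InnerProductSpace ℝ V]
    (Φ : ℝ → V →L[ℝ] V) (C η : ℝ) (S : Submodule ℝ V) : Prop :=
  (∀ t : ℝ, S.map (Φ t).toLinearMap ≤ S) ∧
  ∀ t : ℝ, 0 ≤ t → ∀ u ∈ S, ∀ v ∈ S,
    area (Φ t u) (Φ t v) ≤ C * Real.exp (-η * t) * area u v

/-- `S` is an invariant sectionally expanding subspace of the linear flow `Φ`. -/
def SectionallyExpanding {V : Type*} [NormedAddCommGroup V] [InnerProductSpace ℝ V]
    (Φ : ℝ → V →L[ℝ] V) (C η : ℝ) (S : Submodule ℝ V) : Prop :=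
  (∀ t : ℝ, S.map (Φ t).toLinearMap ≤ S) ∧
  ∀ t : ℝ, 0 ≤ t → ∀ u ∈ S, ∀ v ∈ S,
    C⁻¹ * Real.exp (η * t) * area u v ≤ area (Φ t u) (Φ t v)

lemma area_pos_of_linearIndependent {V : Type*} [NormedAddCommGroup V]
    [InnerProductSpace ℝ V] {u v : V} (h : LinearIndependent ℝ ![u, v]) :
    0 < area u v := by
  have hu : u ≠ 0 := by
    intro h0
    exact (h.ne_zero 0) (by simpa using h0)
  have hv : v ≠ 0 := by
    intro h0
    exact (h.ne_zero 1) (by simpa using h0)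
  have hlt : |⟪u, v⟫| < ‖u‖ * ‖v‖ := by
    rcases lt_or_eq_of_le (abs_real_inner_le_norm u v) with hlt | heq
    · exact hlt
    · exfalso
      have := (norm_inner_eq_norm_iff (𝕜 := ℝ) hu hv).mp (by simpa using heq)
      obtain ⟨r, hr, hrv⟩ := this
      have : ¬ LinearIndependent ℝ ![u, v] := by
        rw [LinearIndependent.pair_iff' hu]
        push_neg
        exact ⟨r, hrv.symm⟩
      exact this h
  apply Real.sqrt_pos.mpr
  have h1 : ⟪u, v⟫ ^ 2 < (‖u‖ * ‖v‖) ^ 2 := by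
    rw [← sq_abs]
    exact pow_lt_pow_left₀ hlt (abs_nonneg _) (by norm_num)
  nlinarith

/-- A sectionally contracting and a sectionally expanding invariant subspace
intersect in dimension at most 1. -/
lemma inter_finrank_le_one {V : Type*} [NormedAddCommGroup V]
    [InnerProductSpace ℝ V] [FiniteDimensional ℝ V]
    (Φ : ℝ → V →L[ℝ] V) (C η : ℝ) (hC : 1 ≤ C) (hη : 0 < η)
    (S T : Submodule ℝ V)
    (hS : SectionallyContracting Φ C η S) (hT : SectionallyExpanding Φ C η T) :
    Module.finrank ℝ ↥(S ⊓ T) ≤ 1 := by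
  by_contra hcon
  push_neg at hcon
  obtain ⟨f, hf⟩ := exists_linearIndependent_of_le_finrank
    (R := ℝ) (M := ↥(S ⊓ T)) (n := 2) hcon
  have hg : LinearIndependent ℝ (fun i => ((f i : V))) :=
    hf.map' (S ⊓ T).subtype (Submodule.ker_subtype _)
  set u : V := (f 0 : V) with hu
  set v : V := (f 1 : V) with hv
  have hpair : LinearIndependent ℝ ![u, v] := by
    have : ![u, v] = fun i => ((f i : V)) := by
      ext i
      fin_cases i <;> rfl
    rw [this]
    exact hg
  have hA : 0 < area u v := area_pos_of_linearIndependent hpair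
  have huS : u ∈ S := ((f 0).2 : (f 0 : V) ∈ S ⊓ T).1
  have huT : u ∈ T := ((f 0).2 : (f 0 : V) ∈ S ⊓ T).2
  have hvS : v ∈ S := ((f 1).2 : (f 1 : V) ∈ S ⊓ T).1
  have hvT : v ∈ T := ((f 1).2 : (f 1 : V) ∈ S ⊓ T).2
  have hC0 : (0 : ℝ) < C := lt_of_lt_of_le one_pos hC
  set t : ℝ := (Real.log C + 1) / η with ht
  have hlogC : 0 ≤ Real.log C := Real.log_nonneg hC
  have ht0 : 0 ≤ t := div_nonneg (by linarith) hη.le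
  have hηt : η * t = Real.log C + 1 := by
    rw [ht]
    field_simp
  have hX : Real.exp (η * t) = C * Real.exp 1 := by
    rw [hηt, Real.exp_add, Real.exp_log hC0]
  set X : ℝ := Real.exp (η * t) with hXdef
  have hX0 : 0 < X := Real.exp_pos _
  have hle : C⁻¹ * X * area u v ≤ C * X⁻¹ * area u v := by
    have h1 := hT.2 t ht0 u huT v hvT
    have h2 := hS.2 t ht0 u huS v hvS
    have hXn : Real.exp (-η * t) = X⁻¹ := by
      rw [hXdef, ← Real.exp_neg, neg_mul]
    rw [hXn] at h2
    exact le_trans h1 h2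
  have hle' : C⁻¹ * X ≤ C * X⁻¹ := le_of_mul_le_mul_right (by simpa [mul_assoc] using hle) hA
  have hdiv : X / C ≤ C / X := by
    rw [div_eq_inv_mul, div_eq_mul_inv]
    exact hle'
  have hXX : X * X ≤ C * C := (div_le_div_iff₀ hC0 hX0).mp hdiv
  have he : (2 : ℝ) ≤ Real.exp 1 := by
    have := Real.add_one_le_exp (1 : ℝ)
    linarith
  have hX2C : 2 * C ≤ X := by
    rw [hX]
    nlinarith
  nlinarith

/-- If the tangent space at a hyperbolic singularity (with hyperbolic splitting
`E^s ⊕ E^u`, `dim E^s = Ind(σ) = s`, `E^s` sectionally contracting and `E^u` sectionally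
expanding) contains a sectionally contracting subspace `E` of dimension `l+1` and a
sectionally expanding subspace `F` of dimension `d−l`, then `Ind(σ) − 1 ≤ l ≤ Ind(σ)`. -/
theorem index_estimate {V : Type*} [NormedAddCommGroup V]
    [InnerProductSpace ℝ V] [FiniteDimensional ℝ V]
    (Φ : ℝ → V →L[ℝ] V)
    (hΦ0 : Φ 0 = ContinuousLinearMap.id ℝ V)
    (hΦadd : ∀ t s : ℝ, Φ (t + s) = (Φ t).comp (Φ s))
    (C η : ℝ) (hC : 1 ≤ C) (hη : 0 < η)
    (Es Eu E F : Submodule ℝ V) (d s l : ℕ)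
    (hd : Module.finrank ℝ V = d)
    (hEs : SectionallyContracting Φ C η Es) (hEu : SectionallyExpanding Φ C η Eu)
    (hinf : Es ⊓ Eu = ⊥) (hsup : Es ⊔ Eu = ⊤)
    (hds : Module.finrank ℝ ↥Es = s) (hdu : Module.finrank ℝ ↥Eu = d - s) (hsd : s ≤ d)
    (hE : SectionallyContracting Φ C η E) (hF : SectionallyExpanding Φ C η F)
    (hdE : Module.finrank ℝ ↥E = l + 1) (hdF : Module.finrank ℝ ↥F = d - l)
    (hld : l ≤ d) :
    s ≤ l + 1 ∧ l ≤ s := by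
  have key1 : Module.finrank ℝ ↥(E ⊓ Eu) ≤ 1 :=
    inter_finrank_le_one Φ C η hC hη E Eu hE hEu
  have key2 : Module.finrank ℝ ↥(Es ⊓ F) ≤ 1 :=
    inter_finrank_le_one Φ C η hC hη Es F hEs hF
  have eq1 := Submodule.finrank_sup_add_finrank_inf_eq E Eu
  have eq2 := Submodule.finrank_sup_add_finrank_inf_eq Es F
  have hb1 : Module.finrank ℝ ↥(E ⊔ Eu) ≤ d := hd ▸ Submodule.finrank_le _
  have hb2 : Module.finrank ℝ ↥(Es ⊔ F) ≤ d := hd ▸ Submodule.finrank_le _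
  rw [hdE, hdu] at eq1
  rw [hds, hdF] at eq2
  omega
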